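/- Let G₀ be the directed graph on the eight vertices {U, X₀, X₁, D, o, Y₀, Δ, E₀} with edge set {(U,Y₀), (U,D), (U,X₀), (U,X₁), (X₀,Y₀), (X₀,X₁), (X₀,Δ), (X₀,D), (X₁,Δ), (X₁,D), (E₀,Y₀), (E₀,Δ), (o,Δ)} (the Δ-SWIG of the 2×2 difference-in-differences model with pre-treatment time-varying covariates). Let G be any directed graph obtained from G₀ by adding a nonempty subset of the three edges (Y₀,Δ) (state dependence), (Y₀,D) (outcome–treatment feedback), and (Y₀,X₁) (outcome–covariate feedback). Then for every subset Z of {X₀, X₁, Y₀}, the sets {D} and {Δ} are not d-separated by Z ∪ {o} in G; that is, in the presence of any form of outcome dynamics, no set of observable variables d-separates the treatment from the difference of untreated potential outcomes, so conditional parallel trends cannot be deduced from the graph. -/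
import Mathlib


/-! ## Directed graphs, paths, d-separation -/

namespace DeltaSwig

variable {V : Type*}

/-- `b` is a descendant of `a`: reachable from `a` by a nonempty directed path. -/
def Descendant (E : V → V → Prop) (a b : V) : Prop := Relation.TransGen E a b

/-- A directed graph is a DAG if no vertex is related to itself by the
transitive closure of the edge relation. -/
def IsDAG (E : V → V → Prop) : Prop := ∀ v : V, ¬ Relation.TransGen E v v

/-- A path of length `k ≥ 1` between `v 0` and `v k`: pairwise distinct vertices,
consecutive vertices joined by an edge in either direction. -/
structure IsPath (E : V → V → Prop) (k : ℕ) (v : ℕ → V) : Prop where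
  one_le : 1 ≤ k
  inj : ∀ i ≤ k, ∀ j ≤ k, v i = v j → i = j
  adj : ∀ i < k, E (v i) (v (i + 1)) ∨ E (v (i + 1)) (v i)

/-- The interior vertex `v j` is a collider on the path `v`. -/
def IsCollider (E : V → V → Prop) (v : ℕ → V) (j : ℕ) : Prop :=
  E (v (j - 1)) (v j) ∧ E (v (j + 1)) (v j)

/-- The path `v` (of length `k`) is blocked by the set `Z`. -/
def Blocked (E : V → V → Prop) (k : ℕ) (v : ℕ → V) (Z : Set V) : Prop :=
  ∃ j, 0 < j ∧ j < k ∧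
    ((¬ IsCollider E v j ∧ v j ∈ Z) ∨
      (IsCollider E v j ∧ v j ∉ Z ∧ ∀ w, Descendant E (v j) w → w ∉ Z))

/-- `X` and `Y` are d-separated by `Z`: every path from a vertex of `X` to a
vertex of `Y` is blocked by `Z`. -/
def DSep (E : V → V → Prop) (X Y Z : Set V) : Prop :=
  ∀ (k : ℕ) (v : ℕ → V), IsPath E k v → v 0 ∈ X → v k ∈ Y → Blocked E k v Z

/-- Restriction of an edge relation to a set of kept vertices (vertex deletion). -/
def restrictEdge (E : V → V → Prop) (K : Set V) : V → V → Prop :=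
  fun a b => E a b ∧ a ∈ K ∧ b ∈ K

/-- The parents of a vertex. -/
def parents (E : V → V → Prop) (v : V) : Set V := {w | E w v}

end DeltaSwig

namespace DeltaSwig

/-- Vertices of the Δ-SWIG of the 2×2 difference-in-differences model with
pre-treatment time-varying covariates. -/
inductive V12 : Type
  | U | X0 | X1 | D | o | Y0 | Δ | E0
  deriving DecidableEq

open V12 in
/-- Edges of the base 2×2 Δ-SWIG with pre-treatment time-varying covariates. -/
def E12 : V12 → V12 → Prop := fun a b =>
  (a, b) ∈ ([(U, Y0), (U, D), (U, X0), (U, X1),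
    (X0, Y0), (X0, X1), (X0, Δ), (X0, D),
    (X1, Δ), (X1, D),
    (E0, Y0), (E0, Δ), (o, Δ)] : List (V12 × V12))

open V12 in
/-- The Δ-SWIG augmented by the outcome-dynamics edges: state dependence
`Y₀ → Δ` (if `b1`), outcome–treatment feedback `Y₀ → D` (if `b2`), and
outcome–covariate feedback `Y₀ → X₁` (if `b3`). -/
def E13 (b1 b2 b3 : Prop) : V12 → V12 → Prop := fun a b =>
  E12 a b ∨ (b1 ∧ a = Y0 ∧ b = Δ) ∨ (b2 ∧ a = Y0 ∧ b = D) ∨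
    (b3 ∧ a = Y0 ∧ b = X1)


open V12

instance : ∀ a b : V12, Decidable (E12 a b) := fun a b =>
  inferInstanceAs (Decidable ((a, b) ∈ _))

lemma mem_obs {Z : Set V12} (hZ : Z ⊆ {X0, X1, Y0}) {a : V12}
    (h : a ≠ X0 ∧ a ≠ X1 ∧ a ≠ Y0 ∧ a ≠ o) : a ∉ Z ∪ {o} := by
  rintro (hm | hm)
  · rcases hZ hm with rfl | rfl | rfl
    · exact h.1 rfl
    · exact h.2.1 rfl
    · exact h.2.2.1 rfl
  · exact h.2.2.2 hm

lemma not_E13 {b1 b2 b3 : Prop} {a b : V12} (h1 : ¬ E12 a b)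
    (h2 : a = Y0 → b ≠ Δ ∧ b ≠ D ∧ b ≠ X1) : ¬ E13 b1 b2 b3 a b := by
  rintro (h | ⟨-, rfl, rfl⟩ | ⟨-, rfl, rfl⟩ | ⟨-, rfl, rfl⟩)
  · exact h1 h
  · exact (h2 rfl).1 rfl
  · exact (h2 rfl).2.1 rfl
  · exact (h2 rfl).2.2 rfl

open V12 in
/-- **no conditional parallel trends under outcome dynamics.**
If the 2×2 Δ-SWIG is augmented by a nonempty subset of the edges `Y₀ → Δ`,
`Y₀ → D`, `Y₀ → X₁`, then for every subset `Z` of the observable variables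
`{X₀, X₁, Y₀}`, the sets `{D}` and `{Δ}` are not d-separated by `Z ∪ {o}`. -/
theorem no_dsep_with_outcome_dynamics (b1 b2 b3 : Prop) (hne : b1 ∨ b2 ∨ b3) :
    ∀ Z : Set V12, Z ⊆ {X0, X1, Y0} →
      ¬ DSep (E13 b1 b2 b3) {D} {Δ} (Z ∪ {o}) := by
  intro Z hZ hsep
  by_cases hY : Y0 ∈ Z
  · -- path D ← U → Y0 ← E0 → Δ
    obtain ⟨j, hj0, hjk, hcase⟩ := hsep 4
      (fun i => match i with | 0 => D | 1 => U | 2 => Y0 | 3 => E0 | _ => Δ)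
      ⟨by norm_num, by decide, by
        intro i hi
        interval_cases i
        · exact Or.inr (Or.inl (by decide))
        · exact Or.inl (Or.inl (by decide))
        · exact Or.inr (Or.inl (by decide))
        · exact Or.inl (Or.inl (by decide))⟩ rfl rfl
    interval_cases j
    · rcases hcase with ⟨-, hmem⟩ | ⟨⟨h, -⟩, -, -⟩
      · exact mem_obs hZ (by decide) hmem
      · exact not_E13 (by decide) (by decide) h
    · rcases hcase with ⟨hnc, -⟩ | ⟨-, hmem, -⟩
      · exact hnc ⟨Or.inl (by decide), Or.inl (by decide)⟩
      · exact hmem (Or.inl hY)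
    · rcases hcase with ⟨-, hmem⟩ | ⟨⟨h, -⟩, -, -⟩
      · exact mem_obs hZ (by decide) hmem
      · exact not_E13 (by decide) (by decide) h
  · rcases hne with hb | hb | hb
    · -- b1 : path D ← U → Y0 → Δ
      obtain ⟨j, hj0, hjk, hcase⟩ := hsep 3
        (fun i => match i with | 0 => D | 1 => U | 2 => Y0 | _ => Δ)
        ⟨by norm_num, by decide, by
          intro i hi
          interval_cases i
          · exact Or.inr (Or.inl (by decide))
          · exact Or.inl (Or.inl (by decide))
          · exact Or.inl (Or.inr (Or.inl ⟨hb, rfl, rfl⟩))⟩ rfl rfl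
      interval_cases j
      · rcases hcase with ⟨-, hmem⟩ | ⟨⟨h, -⟩, -, -⟩
        · exact mem_obs hZ (by decide) hmem
        · exact not_E13 (by decide) (by decide) h
      · rcases hcase with ⟨-, hmem⟩ | ⟨⟨-, h⟩, -, -⟩
        · exact hmem.elim hY (by simp)
        · exact not_E13 (by decide) (by decide) h
    · -- b2 : path D ← Y0 ← E0 → Δ
      obtain ⟨j, hj0, hjk, hcase⟩ := hsep 3
        (fun i => match i with | 0 => D | 1 => Y0 | 2 => E0 | _ => Δ)
        ⟨by norm_num, by decide, by
          intro i hi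
          interval_cases i
          · exact Or.inr (Or.inr (Or.inr (Or.inl ⟨hb, rfl, rfl⟩)))
          · exact Or.inr (Or.inl (by decide))
          · exact Or.inl (Or.inl (by decide))⟩ rfl rfl
      interval_cases j
      · rcases hcase with ⟨-, hmem⟩ | ⟨⟨h, -⟩, -, -⟩
        · exact hmem.elim hY (by simp)
        · exact not_E13 (by decide) (by decide) h
      · rcases hcase with ⟨-, hmem⟩ | ⟨⟨h, -⟩, -, -⟩
        · exact mem_obs hZ (by decide) hmem
        · exact not_E13 (by decide) (by decide) h
    · -- b3
      by_cases hX1 : X1 ∈ Z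
      · -- path D ← U → X1 ← Y0 ← E0 → Δ
        obtain ⟨j, hj0, hjk, hcase⟩ := hsep 5
          (fun i => match i with
            | 0 => D | 1 => U | 2 => X1 | 3 => Y0 | 4 => E0 | _ => Δ)
          ⟨by norm_num, by decide, by
            intro i hi
            interval_cases i
            · exact Or.inr (Or.inl (by decide))
            · exact Or.inl (Or.inl (by decide))
            · exact Or.inr (Or.inr (Or.inr (Or.inr ⟨hb, rfl, rfl⟩)))
            · exact Or.inr (Or.inl (by decide))
            · exact Or.inl (Or.inl (by decide))⟩ rfl rfl
        interval_cases j
        · rcases hcase with ⟨-, hmem⟩ | ⟨⟨h, -⟩, -, -⟩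
          · exact mem_obs hZ (by decide) hmem
          · exact not_E13 (by decide) (by decide) h
        · rcases hcase with ⟨hnc, -⟩ | ⟨-, hmem, -⟩
          · exact hnc ⟨Or.inl (by decide),
              Or.inr (Or.inr (Or.inr ⟨hb, rfl, rfl⟩))⟩
          · exact hmem (Or.inl hX1)
        · rcases hcase with ⟨-, hmem⟩ | ⟨⟨h, -⟩, -, -⟩
          · exact hmem.elim hY (by simp)
          · exact not_E13 (by decide) (by decide) h
        · rcases hcase with ⟨-, hmem⟩ | ⟨⟨h, -⟩, -, -⟩
          · exact mem_obs hZ (by decide) hmem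
          · exact not_E13 (by decide) (by decide) h
      · -- path D ← X1 ← Y0 ← E0 → Δ
        obtain ⟨j, hj0, hjk, hcase⟩ := hsep 4
          (fun i => match i with
            | 0 => D | 1 => X1 | 2 => Y0 | 3 => E0 | _ => Δ)
          ⟨by norm_num, by decide, by
            intro i hi
            interval_cases i
            · exact Or.inr (Or.inl (by decide))
            · exact Or.inr (Or.inr (Or.inr (Or.inr ⟨hb, rfl, rfl⟩)))
            · exact Or.inr (Or.inl (by decide))
            · exact Or.inl (Or.inl (by decide))⟩ rfl rfl
        interval_cases j
        · rcases hcase with ⟨-, hmem⟩ | ⟨⟨h, -⟩, -, -⟩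
          · exact hmem.elim hX1 (by simp)
          · exact not_E13 (by decide) (by decide) h
        · rcases hcase with ⟨-, hmem⟩ | ⟨⟨h, -⟩, -, -⟩
          · exact hmem.elim hY (by simp)
          · exact not_E13 (by decide) (by decide) h
        · rcases hcase with ⟨-, hmem⟩ | ⟨⟨h, -⟩, -, -⟩
          · exact mem_obs hZ (by decide) hmem
          · exact not_E13 (by decide) (by decide) h

end DeltaSwig
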